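/- Let β₁, β₂, β₃ be positive real numbers that are algebraically independent over ℚ, and let C be a nonzero real number. Then the elements of the family, indexed by triples of positive integers (k₁,k₂,k₃), given by C k₁² k₂² k₃² / [ (β₁k₁² + 1)(β₂k₂² + 1)(β₃k₃² + 1) ], are ℚ-linearly independent. -/

import Mathlib

/-- If `β₁, β₂, β₃ > 0` are algebraically independent over `ℚ` and `C ≠ 0`, then
the family `C k₁²k₂²k₃² / ((β₁k₁²+1)(β₂k₂²+1)(β₃k₃²+1))`, indexed by triples of
positive integers, is `ℚ`-linearly independent. -/
theorem qLinIndep_triple_family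
    (β₁ β₂ β₃ : ℝ) (hβ₁ : 0 < β₁) (hβ₂ : 0 < β₂) (hβ₃ : 0 < β₃)
    (hindep : AlgebraicIndependent ℚ ![β₁, β₂, β₃])
    (C : ℝ) (hC : C ≠ 0) :
    ∀ (s : Finset (ℕ × ℕ × ℕ)),
      (∀ k ∈ s, 0 < k.1 ∧ 0 < k.2.1 ∧ 0 < k.2.2) →
      ∀ q : ℕ × ℕ × ℕ → ℚ, (∃ k ∈ s, q k ≠ 0) →
      ∑ k ∈ s, (q k : ℝ) *
          (C * k.1 ^ 2 * k.2.1 ^ 2 * k.2.2 ^ 2 /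
            ((β₁ * k.1 ^ 2 + 1) * (β₂ * k.2.1 ^ 2 + 1) * (β₃ * k.2.2 ^ 2 + 1))) ≠ 0 := by
  classical
  intro s hs q hq hsum
  obtain ⟨m, hm, hqm⟩ := hq
  set s₁ : Finset ℕ := s.image (fun k => k.1) with hs₁
  set s₂ : Finset ℕ := s.image (fun k => k.2.1) with hs₂
  set s₃ : Finset ℕ := s.image (fun k => k.2.2) with hs₃
  -- denominators are positive
  have hd₁ : ∀ n : ℕ, (0:ℝ) < β₁ * n ^ 2 + 1 := fun n => by positivity
  have hd₂ : ∀ n : ℕ, (0:ℝ) < β₂ * n ^ 2 + 1 := fun n => by positivity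
  have hd₃ : ∀ n : ℕ, (0:ℝ) < β₃ * n ^ 2 + 1 := fun n => by positivity
  -- the polynomial obtained by clearing denominators
  set P : MvPolynomial (Fin 3) ℚ :=
    ∑ k ∈ s, MvPolynomial.C (q k * (k.1:ℚ)^2 * (k.2.1:ℚ)^2 * (k.2.2:ℚ)^2) *
      ((∏ a ∈ s₁.erase k.1, (MvPolynomial.C ((a:ℚ)^2) * MvPolynomial.X 0 + 1)) *
       (∏ b ∈ s₂.erase k.2.1, (MvPolynomial.C ((b:ℚ)^2) * MvPolynomial.X 1 + 1)) *
       (∏ c ∈ s₃.erase k.2.2, (MvPolynomial.C ((c:ℚ)^2) * MvPolynomial.X 2 + 1))) with hPdef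
  -- the cleared sum over ℝ vanishes
  have hkey : ∑ k ∈ s,
      ((q k : ℝ) * (k.1:ℝ)^2 * (k.2.1:ℝ)^2 * (k.2.2:ℝ)^2 *
        ((∏ a ∈ s₁.erase k.1, (β₁ * (a:ℝ)^2 + 1)) *
         (∏ b ∈ s₂.erase k.2.1, (β₂ * (b:ℝ)^2 + 1)) *
         (∏ c ∈ s₃.erase k.2.2, (β₃ * (c:ℝ)^2 + 1)))) = 0 := by
    set D : ℝ := (∏ a ∈ s₁, (β₁ * (a:ℝ)^2 + 1)) * (∏ b ∈ s₂, (β₂ * (b:ℝ)^2 + 1)) *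
      (∏ c ∈ s₃, (β₃ * (c:ℝ)^2 + 1)) with hD
    have h1 : ∑ k ∈ s, (q k : ℝ) *
        (C * k.1 ^ 2 * k.2.1 ^ 2 * k.2.2 ^ 2 /
          ((β₁ * k.1 ^ 2 + 1) * (β₂ * k.2.1 ^ 2 + 1) * (β₃ * k.2.2 ^ 2 + 1))) * D = 0 := by
      rw [← Finset.sum_mul, hsum, zero_mul]
    have h2 : ∀ k ∈ s, (q k : ℝ) *
        (C * k.1 ^ 2 * k.2.1 ^ 2 * k.2.2 ^ 2 /
          ((β₁ * k.1 ^ 2 + 1) * (β₂ * k.2.1 ^ 2 + 1) * (β₃ * k.2.2 ^ 2 + 1))) * D =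
        C * ((q k : ℝ) * (k.1:ℝ)^2 * (k.2.1:ℝ)^2 * (k.2.2:ℝ)^2 *
        ((∏ a ∈ s₁.erase k.1, (β₁ * (a:ℝ)^2 + 1)) *
         (∏ b ∈ s₂.erase k.2.1, (β₂ * (b:ℝ)^2 + 1)) *
         (∏ c ∈ s₃.erase k.2.2, (β₃ * (c:ℝ)^2 + 1)))) := by
      intro k hk
      have hk1 : k.1 ∈ s₁ := Finset.mem_image.mpr ⟨k, hk, rfl⟩
      have hk2 : k.2.1 ∈ s₂ := Finset.mem_image.mpr ⟨k, hk, rfl⟩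
      have hk3 : k.2.2 ∈ s₃ := Finset.mem_image.mpr ⟨k, hk, rfl⟩
      rw [hD, ← Finset.mul_prod_erase s₁ _ hk1, ← Finset.mul_prod_erase s₂ _ hk2,
        ← Finset.mul_prod_erase s₃ _ hk3]
      field_simp
    rw [Finset.sum_congr rfl h2, ← Finset.mul_sum] at h1
    exact (mul_eq_zero.mp h1).resolve_left hC
  -- P vanishes at (β₁, β₂, β₃)
  have hP0 : MvPolynomial.aeval ![β₁, β₂, β₃] P = 0 := by
    rw [hPdef, map_sum, ← hkey]
    refine Finset.sum_congr rfl fun k hk => ?_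
    simp only [map_mul, map_add, map_one, map_prod, MvPolynomial.aeval_C, MvPolynomial.aeval_X,
      Matrix.cons_val_zero, Matrix.cons_val_one, Matrix.head_cons, Matrix.cons_val_two,
      Matrix.tail_cons, eq_ratCast]
    push_cast
    rw [show ∏ a ∈ s₁.erase k.1, ((a:ℝ)^2 * β₁ + 1) = ∏ a ∈ s₁.erase k.1, (β₁ * (a:ℝ)^2 + 1)
        from Finset.prod_congr rfl fun _ _ => by ring,
      show ∏ b ∈ s₂.erase k.2.1, ((b:ℝ)^2 * β₂ + 1) = ∏ b ∈ s₂.erase k.2.1, (β₂ * (b:ℝ)^2 + 1)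
        from Finset.prod_congr rfl fun _ _ => by ring,
      show ∏ c ∈ s₃.erase k.2.2, ((c:ℝ)^2 * β₃ + 1) = ∏ c ∈ s₃.erase k.2.2, (β₃ * (c:ℝ)^2 + 1)
        from Finset.prod_congr rfl fun _ _ => by ring]
  -- hence P = 0
  have hPz : P = 0 := hindep (by rw [map_zero]; exact hP0)
  -- evaluate P at the rational point (-1/m₁², -1/m₂², -1/m₃²)
  obtain ⟨hm1, hm2, hm3⟩ := hs m hm
  set ρ : Fin 3 → ℚ := ![-(1/(m.1:ℚ)^2), -(1/(m.2.1:ℚ)^2), -(1/(m.2.2:ℚ)^2)] with hρ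
  have hev : MvPolynomial.eval ρ P = 0 := by rw [hPz, map_zero]
  have sq_ne : ∀ a n : ℕ, 0 < a → 0 < n → a ≠ n → ((a:ℚ)^2 ≠ (n:ℚ)^2) := by
    intro a n _ _ hne h
    exact hne (Nat.pow_left_injective two_ne_zero (by exact_mod_cast h))
  -- the factor at a = n vanishes
  have hfac : ∀ n : ℕ, 0 < n → ((n:ℚ)^2 * (-(1/(n:ℚ)^2)) + 1) = 0 := by
    intro n hn
    have : (n:ℚ) ≠ 0 := Nat.cast_ne_zero.mpr hn.ne'
    field_simp
    norm_num
  have hev' : MvPolynomial.eval ρ P =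
      ∑ k ∈ s, (q k * (k.1:ℚ)^2 * (k.2.1:ℚ)^2 * (k.2.2:ℚ)^2) *
        ((∏ a ∈ s₁.erase k.1, ((a:ℚ)^2 * ρ 0 + 1)) *
         (∏ b ∈ s₂.erase k.2.1, ((b:ℚ)^2 * ρ 1 + 1)) *
         (∏ c ∈ s₃.erase k.2.2, ((c:ℚ)^2 * ρ 2 + 1))) := by
    rw [hPdef, map_sum]
    refine Finset.sum_congr rfl fun k hk => ?_
    simp [MvPolynomial.eval_prod]
  have hm1' : m.1 ∈ s₁ := Finset.mem_image.mpr ⟨m, hm, rfl⟩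
  have hm2' : m.2.1 ∈ s₂ := Finset.mem_image.mpr ⟨m, hm, rfl⟩
  have hm3' : m.2.2 ∈ s₃ := Finset.mem_image.mpr ⟨m, hm, rfl⟩
  have hρ0 : ρ 0 = -(1/(m.1:ℚ)^2) := rfl
  have hρ1 : ρ 1 = -(1/(m.2.1:ℚ)^2) := rfl
  have hρ2 : ρ 2 = -(1/(m.2.2:ℚ)^2) := rfl
  have hsingle : MvPolynomial.eval ρ P =
      (q m * (m.1:ℚ)^2 * (m.2.1:ℚ)^2 * (m.2.2:ℚ)^2) *
        ((∏ a ∈ s₁.erase m.1, ((a:ℚ)^2 * ρ 0 + 1)) *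
         (∏ b ∈ s₂.erase m.2.1, ((b:ℚ)^2 * ρ 1 + 1)) *
         (∏ c ∈ s₃.erase m.2.2, ((c:ℚ)^2 * ρ 2 + 1))) := by
    rw [hev']
    refine Finset.sum_eq_single_of_mem m hm fun k hk hne => ?_
    have : k.1 ≠ m.1 ∨ k.2.1 ≠ m.2.1 ∨ k.2.2 ≠ m.2.2 := by
      by_contra h
      push_neg at h
      exact hne (Prod.ext h.1 (Prod.ext h.2.1 h.2.2))
    rcases this with h | h | h
    · have hmem : m.1 ∈ s₁.erase k.1 := Finset.mem_erase.mpr ⟨Ne.symm h, hm1'⟩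
      rw [Finset.prod_eq_zero hmem (by rw [hρ0]; exact hfac m.1 hm1)]
      ring
    · have hmem : m.2.1 ∈ s₂.erase k.2.1 := Finset.mem_erase.mpr ⟨Ne.symm h, hm2'⟩
      rw [Finset.prod_eq_zero hmem (by rw [hρ1]; exact hfac m.2.1 hm2)]
      ring
    · have hmem : m.2.2 ∈ s₃.erase k.2.2 := Finset.mem_erase.mpr ⟨Ne.symm h, hm3'⟩
      rw [Finset.prod_eq_zero hmem (by rw [hρ2]; exact hfac m.2.2 hm3)]
      ring
  -- but the m-term is nonzero
  have hpos₁ : ∀ a ∈ s₁, 0 < a := by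
    intro a ha; obtain ⟨k, hk, rfl⟩ := Finset.mem_image.mp ha; exact (hs k hk).1
  have hpos₂ : ∀ a ∈ s₂, 0 < a := by
    intro a ha; obtain ⟨k, hk, rfl⟩ := Finset.mem_image.mp ha; exact (hs k hk).2.1
  have hpos₃ : ∀ a ∈ s₃, 0 < a := by
    intro a ha; obtain ⟨k, hk, rfl⟩ := Finset.mem_image.mp ha; exact (hs k hk).2.2
  have hfacne : ∀ (a n : ℕ), 0 < a → 0 < n → a ≠ n → ((a:ℚ)^2 * (-(1/(n:ℚ)^2)) + 1) ≠ 0 := by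
    intro a n ha hn hne h
    have hn0 : (n:ℚ) ≠ 0 := Nat.cast_ne_zero.mpr hn.ne'
    apply sq_ne a n ha hn hne
    field_simp at h
    linarith
  have hne0 : MvPolynomial.eval ρ P ≠ 0 := by
    rw [hsingle]
    apply mul_ne_zero
    · have h1 : ((m.1:ℚ))^2 ≠ 0 := pow_ne_zero _ (Nat.cast_ne_zero.mpr hm1.ne')
      have h2 : ((m.2.1:ℚ))^2 ≠ 0 := pow_ne_zero _ (Nat.cast_ne_zero.mpr hm2.ne')
      have h3 : ((m.2.2:ℚ))^2 ≠ 0 := pow_ne_zero _ (Nat.cast_ne_zero.mpr hm3.ne')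
      exact mul_ne_zero (mul_ne_zero (mul_ne_zero hqm h1) h2) h3
    · apply mul_ne_zero
      apply mul_ne_zero
      · exact Finset.prod_ne_zero_iff.mpr fun a ha => by
          obtain ⟨hane, hamem⟩ := Finset.mem_erase.mp ha
          rw [hρ0]; exact hfacne a m.1 (hpos₁ a hamem) hm1 hane
      · exact Finset.prod_ne_zero_iff.mpr fun a ha => by
          obtain ⟨hane, hamem⟩ := Finset.mem_erase.mp ha
          rw [hρ1]; exact hfacne a m.2.1 (hpos₂ a hamem) hm2 hane
      · exact Finset.prod_ne_zero_iff.mpr fun a ha => by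
          obtain ⟨hane, hamem⟩ := Finset.mem_erase.mp ha
          rw [hρ2]; exact hfacne a m.2.2 (hpos₃ a hamem) hm3 hane
  exact hne0 hev
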